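/- The number of permutations in S_n in which every digit is a separator equals 2^k · k! if n = 4k for some k ≥ 1, and equals 0 otherwise. -/

import Mathlib

/-- The entry at position `k` of `σ` (0-indexed) is a *vertical separator*:
there are positions `j, j+1, j+2` with `k = j+1` and `|σ j - σ (j+2)| = 1`. -/
def IsVSepPos {n : ℕ} (σ : Equiv.Perm (Fin n)) (k : Fin n) : Prop :=
  ∃ (j : ℕ) (h : j + 2 < n), (k : ℕ) = j + 1 ∧
    (((σ ⟨j, by omega⟩).val : ℤ) - ((σ ⟨j + 2, h⟩).val : ℤ)).natAbs = 1

/-- The value `b` is a vertical separator of `σ`. -/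
def IsVSepVal {n : ℕ} (σ : Equiv.Perm (Fin n)) (b : Fin n) : Prop :=
  IsVSepPos σ (σ⁻¹ b)

/-- The value `a` is a *horizontal separator* of `σ`: the values `a-1` and `a+1`
occupy adjacent positions of `σ` (their sum is `2a` and they differ by `2`). -/
def IsHSepVal {n : ℕ} (σ : Equiv.Perm (Fin n)) (a : Fin n) : Prop :=
  ∃ (j : ℕ) (h : j + 1 < n),
    (((σ ⟨j, by omega⟩).val : ℤ) - ((σ ⟨j + 1, h⟩).val : ℤ)).natAbs = 2 ∧
    ((σ ⟨j, by omega⟩).val : ℤ) + ((σ ⟨j + 1, h⟩).val : ℤ) = 2 * (a : ℤ)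

/-- `σ` has a bond at positions `j, j+1`. -/
def PermBondAt {n : ℕ} (σ : Equiv.Perm (Fin n)) (j : ℕ) (h : j + 1 < n) : Prop :=
  (((σ ⟨j, by omega⟩).val : ℤ) - ((σ ⟨j + 1, h⟩).val : ℤ)).natAbs = 1

/-- The sequence obtained from `σ` by deleting the entry at position `p`
and standardizing. -/
def delSeq {n : ℕ} (σ : Equiv.Perm (Fin n)) (p : Fin n) : Fin (n - 1) → ℕ :=
  fun k =>
    let q : Fin n :=
      if (k : ℕ) < (p : ℕ) then ⟨k, by have := k.isLt; omega⟩
      else ⟨(k : ℕ) + 1, by have := k.isLt; omega⟩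
    if (σ q).val < (σ p).val then (σ q).val else (σ q).val - 1

/-- A sequence has a bond at positions `j, j+1`. -/
def SeqBondAt {m : ℕ} (g : Fin m → ℕ) (j : ℕ) (h : j + 1 < m) : Prop :=
  ((g ⟨j, by omega⟩ : ℤ) - (g ⟨j + 1, h⟩ : ℤ)).natAbs = 1

/-- The number of bonds of a sequence. -/
noncomputable def seqBondCount {m : ℕ} (g : Fin m → ℕ) : ℕ :=
  Nat.card {p : Fin m × Fin m //
    (p.2 : ℕ) = (p.1 : ℕ) + 1 ∧ ((g p.1 : ℤ) - (g p.2 : ℤ)).natAbs = 1}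

/-- The number of bonds of `σ`. -/
noncomputable def bondCount {n : ℕ} (σ : Equiv.Perm (Fin n)) : ℕ :=
  Nat.card {p : Fin n × Fin n //
    (p.2 : ℕ) = (p.1 : ℕ) + 1 ∧ (((σ p.1).val : ℤ) - ((σ p.2).val : ℤ)).natAbs = 1}


namespace Sep8

variable {n : ℕ}

/-- nat-valued entry accessor; out-of-range positions give `n`. -/
def A (σ : Equiv.Perm (Fin n)) (j : ℕ) : ℕ :=
  if h : j < n then (σ ⟨j, h⟩).val else n

lemma A_lt (σ : Equiv.Perm (Fin n)) {j : ℕ} (h : j < n) : A σ j < n := by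
  simp [A, h, Fin.is_lt]

lemma A_lt_iff (σ : Equiv.Perm (Fin n)) {j : ℕ} : A σ j < n ↔ j < n := by
  by_cases h : j < n <;> simp [A, h, Fin.is_lt]

lemma A_inj (σ : Equiv.Perm (Fin n)) {i j : ℕ} (hi : i < n) (hj : j < n)
    (h : A σ i = A σ j) : i = j := by
  simp only [A, dif_pos hi, dif_pos hj] at h
  have := σ.injective (Fin.val_injective h)
  exact congrArg Fin.val this

lemma A_surj (σ : Equiv.Perm (Fin n)) {v : ℕ} (hv : v < n) :
    ∃ j, j < n ∧ A σ j = v := by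
  refine ⟨(σ.symm ⟨v, hv⟩).val, Fin.is_lt _, ?_⟩
  simp [A, Fin.is_lt]

def Pv (σ : Equiv.Perm (Fin n)) (b : ℕ) : Prop :=
  ∃ j, j + 2 < n ∧ A σ (j+1) = b ∧
    (A σ j = A σ (j+2) + 1 ∨ A σ (j+2) = A σ j + 1)

def Ph (σ : Equiv.Perm (Fin n)) (a : ℕ) : Prop :=
  ∃ j, j + 1 < n ∧
    ((A σ j = a + 1 ∧ A σ (j+1) + 1 = a) ∨ (A σ (j+1) = a + 1 ∧ A σ j + 1 = a))

def Good (σ : Equiv.Perm (Fin n)) : Prop := ∀ b < n, Pv σ b ∨ Ph σ b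

lemma good_iff (σ : Equiv.Perm (Fin n)) :
    (∀ b : Fin n, IsVSepVal σ b ∨ IsHSepVal σ b) ↔ Good σ := by
  constructor
  · intro h b hb
    rcases h ⟨b, hb⟩ with hv | hh
    · obtain ⟨j, hj, hk, habs⟩ := hv
      left
      refine ⟨j, hj, ?_, ?_⟩
      · have : σ (σ.symm ⟨b, hb⟩) = ⟨b, hb⟩ := σ.apply_symm_apply _
        have h2 : (σ.symm ⟨b, hb⟩) = ⟨j+1, by omega⟩ := Fin.ext hk
        rw [h2] at this
        simp only [A, dif_pos (show j+1 < n by omega)]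
        rw [this]
      · simp only [A, dif_pos (show j < n by omega), dif_pos hj]
        omega
    · obtain ⟨j, hj, habs, hsum⟩ := hh
      right
      refine ⟨j, hj, ?_⟩
      simp only [A, dif_pos (show j < n by omega), dif_pos hj]
      simp only [Fin.val_mk] at hsum
      omega
  · intro h b
    rcases h b.val b.isLt with ⟨j, hj, hk, hd⟩ | ⟨j, hj, hd⟩
    · left
      refine ⟨j, hj, ?_, ?_⟩
      · simp only [A, dif_pos (show j+1 < n by omega)] at hk
        have : σ.symm b = ⟨j+1, by omega⟩ := by
          apply σ.symm_apply_eq.mpr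
          exact (Fin.ext hk.symm : b = _) ▸ rfl
        rw [show (σ⁻¹ : Equiv.Perm (Fin n)) = σ.symm from rfl, this]
      · simp only [A, dif_pos (show j < n by omega), dif_pos hj] at hd
        omega
    · right
      refine ⟨j, hj, ?_, ?_⟩ <;>
        · simp only [A, dif_pos (show j < n by omega), dif_pos hj] at hd
          omega

/-- the two block patterns: `pat false = (2,0,3,1)`, `pat true = (1,3,0,2)`. -/
def pat (e : Bool) (r : ℕ) : ℕ :=
  if e then (if r = 0 then 1 else if r = 1 then 3 else if r = 2 then 0 else 2)
  else (if r = 0 then 2 else if r = 1 then 0 else if r = 2 then 3 else 1)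

lemma pat_lt (e : Bool) (r : ℕ) : pat e r < 4 := by
  cases e <;> simp only [pat] <;> split_ifs <;> omega

lemma pat_inv (e : Bool) {r : ℕ} (hr : r < 4) : pat (!e) (pat e r) = r := by
  cases e <;> interval_cases r <;> rfl

set_option maxHeartbeats 1600000 in
/-- the inflation of `π` by blocks given by `ε` (junk on indices `≥ 4*(n/4)`). -/
def inflPerm (n : ℕ) (π : Equiv.Perm (Fin (n/4))) (ε : Fin (n/4) → Bool) :
    Equiv.Perm (Fin n) where
  toFun i := if h : i.val / 4 < n / 4 then
      ⟨4 * (π ⟨i.val / 4, h⟩).val + pat (ε ⟨i.val / 4, h⟩) (i.val % 4), by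
        have h1 := (π ⟨i.val / 4, h⟩).isLt
        have h2 := pat_lt (ε ⟨i.val / 4, h⟩) (i.val % 4)
        omega⟩
    else i
  invFun j := if h : j.val / 4 < n / 4 then
      ⟨4 * (π.symm ⟨j.val / 4, h⟩).val +
        pat (!(ε (π.symm ⟨j.val / 4, h⟩))) (j.val % 4), by
        have h1 := (π.symm ⟨j.val / 4, h⟩).isLt
        have h2 := pat_lt (!(ε (π.symm ⟨j.val / 4, h⟩))) (j.val % 4)
        omega⟩
    else j
  left_inv := by
    intro i
    by_cases h : i.val / 4 < n / 4
    · simp only [dif_pos h]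
      have hpl := pat_lt (ε ⟨i.val / 4, h⟩) (i.val % 4)
      have hd : (4 * (π ⟨i.val / 4, h⟩).val + pat (ε ⟨i.val / 4, h⟩) (i.val % 4)) / 4
          = (π ⟨i.val / 4, h⟩).val := by omega
      have hm : (4 * (π ⟨i.val / 4, h⟩).val + pat (ε ⟨i.val / 4, h⟩) (i.val % 4)) % 4
          = pat (ε ⟨i.val / 4, h⟩) (i.val % 4) := by omega
      have h2 : (4 * (π ⟨i.val / 4, h⟩).val + pat (ε ⟨i.val / 4, h⟩) (i.val % 4)) / 4 < n / 4 := by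
        rw [hd]; exact (π ⟨i.val / 4, h⟩).isLt
      simp only [dif_pos h2]
      apply Fin.ext
      simp only [Fin.val_mk]
      have he : (⟨(4 * (π ⟨i.val / 4, h⟩).val + pat (ε ⟨i.val / 4, h⟩) (i.val % 4)) / 4, h2⟩ :
          Fin (n/4)) = π ⟨i.val / 4, h⟩ := Fin.ext hd
      rw [he, Equiv.symm_apply_apply, hm, pat_inv _ (Nat.mod_lt _ (by omega))]
      simp only [Fin.val_mk]
      omega
    · simp only [dif_neg h]
  right_inv := by
    intro j
    by_cases h : j.val / 4 < n / 4
    · simp only [dif_pos h]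
      have hpl := pat_lt (!(ε (π.symm ⟨j.val / 4, h⟩))) (j.val % 4)
      set a := π.symm ⟨j.val / 4, h⟩ with ha
      have hd : (4 * a.val + pat (!(ε a)) (j.val % 4)) / 4 = a.val := by omega
      have hm : (4 * a.val + pat (!(ε a)) (j.val % 4)) % 4 = pat (!(ε a)) (j.val % 4) := by
        omega
      have h2 : (4 * a.val + pat (!(ε a)) (j.val % 4)) / 4 < n / 4 := by
        rw [hd]; exact a.isLt
      simp only [← ha]
      simp only [dif_pos h2]
      apply Fin.ext
      simp only [Fin.val_mk]
      have he : (⟨(4 * a.val + pat (!(ε a)) (j.val % 4)) / 4, h2⟩ : Fin (n/4)) = a :=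
        Fin.ext hd
      rw [he, hm]
      have hni : pat (ε a) (pat (!(ε a)) (j.val % 4)) = j.val % 4 := by
        have := pat_inv (!(ε a)) (show j.val % 4 < 4 from Nat.mod_lt _ (by omega))
        rwa [Bool.not_not] at this
      rw [hni, ha, Equiv.apply_symm_apply]
      simp only [Fin.val_mk]
      omega
    · simp only [dif_neg h]

lemma infl_apply {n : ℕ} (π : Equiv.Perm (Fin (n/4))) (ε : Fin (n/4) → Bool)
    {i r : ℕ} (hi : i < n / 4) (hr : r < 4) :
    A (inflPerm n π ε) (4 * i + r) = 4 * (π ⟨i, hi⟩).val + pat (ε ⟨i, hi⟩) r := by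
  have hlt : 4 * i + r < n := by
    have : 4 * (n/4) ≤ n := Nat.mul_div_le n 4
    omega
  have hd : (4 * i + r) / 4 = i := by omega
  have hm : (4 * i + r) % 4 = r := by omega
  simp only [A, dif_pos hlt, inflPerm, Equiv.coe_fn_mk]
  have h4 : (4 * i + r) / 4 < n / 4 := by rw [hd]; exact hi
  simp only [dif_pos h4, Fin.val_mk]
  have hq : (⟨(4*i+r)/4, h4⟩ : Fin (n/4)) = ⟨i, hi⟩ := Fin.ext hd
  rw [hq, hm]

lemma good_infl {n : ℕ} (hn : n % 4 = 0) (π : Equiv.Perm (Fin (n/4))) (ε : Fin (n/4) → Bool) :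
    Good (inflPerm n π ε) := by
  intro b hb
  have h4n : 4 * (n/4) ≤ n := Nat.mul_div_le n 4
  have hm4 : b / 4 < n / 4 := by omega
  set i : Fin (n/4) := π.symm ⟨b / 4, hm4⟩ with hidef
  have hiv : (π i).val = b / 4 := by
    rw [hidef]
    exact congrArg Fin.val (π.apply_symm_apply _)
  have hin : i.val < n / 4 := i.isLt
  have key : ∀ r, r < 4 → ∀ z, z = 4 * i.val + r →
      A (inflPerm n π ε) z = 4 * (b/4) + pat (ε i) r := by
    intro r hr z hz
    rw [hz, infl_apply π ε hin hr, ← hiv]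
  have hs : b % 4 = 0 ∨ b % 4 = 1 ∨ b % 4 = 2 ∨ b % 4 = 3 := by omega
  have hb4 : 4 * (b/4) + b % 4 = b := by omega
  have h0 := key 0 (by omega) (4*i.val) (by omega)
  have h1 := key 1 (by omega) (4*i.val+1) rfl
  have h2 := key 2 (by omega) (4*i.val+2) rfl
  have h3 := key 3 (by omega) (4*i.val+3) rfl
  have h2' := key 2 (by omega) (4*i.val+1+1) (by omega)
  have h3' := key 3 (by omega) (4*i.val+1+2) (by omega)
  have h3'' := key 3 (by omega) (4*i.val+2+1) (by omega)
  have hbound : 4 * i.val + 3 < n := by omega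
  set σ := inflPerm n π ε with hσ
  cases he : ε i <;> rw [he] at h0 h1 h2 h3 h2' h3' h3'' <;>
    simp only [pat] at h0 h1 h2 h3 h2' h3' h3'' <;>
    norm_num at h0 h1 h2 h3 h2' h3' h3''
  · rcases hs with h | h | h | h
    · left; exact ⟨4 * i.val, by omega, by rw [h1]; omega, by rw [h0, h2']; omega⟩
    · right; exact ⟨4 * i.val, by omega, Or.inl ⟨by rw [h0]; omega, by rw [h1]; omega⟩⟩
    · right; exact ⟨4 * i.val + 2, by omega, Or.inl ⟨by rw [h2]; omega, by rw [h3'']; omega⟩⟩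
    · left; exact ⟨4 * i.val + 1, by omega, by rw [h2']; omega, by rw [h1, h3']; omega⟩
  · rcases hs with h | h | h | h
    · left; exact ⟨4 * i.val + 1, by omega, by rw [h2']; omega, by rw [h1, h3']; omega⟩
    · right; exact ⟨4 * i.val + 2, by omega, Or.inr ⟨by rw [h3'']; omega, by rw [h2]; omega⟩⟩
    · right; exact ⟨4 * i.val, by omega, Or.inr ⟨by rw [h1]; omega, by rw [h0]; omega⟩⟩
    · left; exact ⟨4 * i.val, by omega, by rw [h1]; omega, by rw [h0, h2']; omega⟩

lemma perm_ext_A {σ₁ σ₂ : Equiv.Perm (Fin n)} (h : ∀ j, j < n → A σ₁ j = A σ₂ j) :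
    σ₁ = σ₂ := by
  apply Equiv.ext
  intro i
  apply Fin.ext
  have := h i.val i.isLt
  simpa [A, i.isLt] using this

lemma infl_inj {n : ℕ} :
    Function.Injective (fun pe : Equiv.Perm (Fin (n/4)) × (Fin (n/4) → Bool) =>
      inflPerm n pe.1 pe.2) := by
  rintro ⟨π₁, ε₁⟩ ⟨π₂, ε₂⟩ h
  simp only at h
  have h4n : 4 * (n/4) ≤ n := Nat.mul_div_le n 4
  have key : ∀ i : Fin (n/4), π₁ i = π₂ i ∧ ε₁ i = ε₂ i := by
    intro i
    have hi : i.val < n / 4 := i.isLt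
    have e1 := infl_apply π₁ ε₁ hi (show (0:ℕ) < 4 by omega)
    have e2 := infl_apply π₂ ε₂ hi (show (0:ℕ) < 4 by omega)
    rw [h] at e1
    have hie : (⟨i.val, hi⟩ : Fin (n/4)) = i := Fin.ext rfl
    rw [hie] at e1 e2
    have heq : 4 * (π₁ i).val + pat (ε₁ i) 0 = 4 * (π₂ i).val + pat (ε₂ i) 0 := by
      rw [← e1, ← e2]
    have p1 := pat_lt (ε₁ i) 0
    have p2 := pat_lt (ε₂ i) 0
    have hv : (π₁ i).val = (π₂ i).val ∧ pat (ε₁ i) 0 = pat (ε₂ i) 0 := by omega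
    refine ⟨Fin.ext hv.1, ?_⟩
    have := hv.2
    cases hb1 : ε₁ i <;> cases hb2 : ε₂ i <;> rw [hb1, hb2] at this <;>
      simp [pat] at this ⊢
  exact Prod.ext (Equiv.ext fun i => (key i).1) (funext fun i => (key i).2)

/-- An unbounded forced staircase gives a contradiction. -/
lemma zigzag {σ : Equiv.Perm (Fin n)} (h : Good σ) {m : ℕ} (hmn : m + 3 < n)
    (b3 : A σ m = 3) (b1 : A σ (m+1) = 1) (b0 : A σ (m+2) = 0) (b2 : A σ (m+3) = 2) :
    False := by
  -- C t : the staircase extends t further steps (level s = t+1)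
  have C : ∀ t : ℕ, ∃ l, l + (t+1) = m + 1 ∧ m + (t+1) + 3 < n ∧
      A σ (l+1) = 2*(t+1) - 1 ∧ A σ l = 2*(t+1) + 1 ∧
      A σ (m + 2 + (t+1)) = 2*(t+1) ∧ A σ (m + 3 + (t+1)) = 2*(t+1) + 2 := by
    intro t
    induction t with
    | zero =>
      refine ⟨m, by omega, ?_⟩
      -- need : m + 4 < n ∧ A σ (m+4) = 4 , packaged
      have h3 := h 3 (by have := A_lt_iff (σ := σ) (j := m); omega)
      rcases h3 with ⟨j, hj, hA, hd⟩ | ⟨j, hj, hd⟩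
      · -- Pv 3 : impossible
        have hjm : j + 1 = m := A_inj σ (by omega) (by omega) (by rw [hA, b3])
        rcases hd with hc | hc
        · -- A σ j = A σ (j+2) + 1 ; A σ (j+2) = A σ (m+1) = 1 so A σ j = 2 = A σ (m+3)
          have : A σ (j+2) = 1 := by rw [show j + 2 = m + 1 by omega, b1]
          have : j = m + 3 := A_inj σ (by omega) (by omega) (by rw [b2]; omega)
          omega
        · have : A σ (j+2) = 1 := by rw [show j + 2 = m + 1 by omega, b1]
          have hj0 : A σ j = 0 := by omega
          have : j = m + 2 := A_inj σ (by omega) (by omega) (by rw [hj0, b0])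
          omega
      · rcases hd with ⟨hc1, hc2⟩ | ⟨hc1, hc2⟩
        · -- A σ j = 4 ∧ A σ (j+1) = 2 : j+1 = m+3 , so A σ (m+2) = 4 , contra
          have : j + 1 = m + 3 := A_inj σ (by omega) (by omega) (by rw [b2]; omega)
          have : A σ (m+2) = 4 := by rw [show m+2 = j by omega] at b0 ⊢; omega
          omega
        · -- A σ (j+1) = 4 ∧ A σ j = 2 : j = m+3
          have : j = m + 3 := A_inj σ (by omega) (by omega) (by rw [b2]; omega)
          exact ⟨by omega, by omega, by omega,
            by rw [show m+2+1 = m+3 by omega]; omega,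
            by rw [show m+3+1 = j+1 by omega]; omega⟩
    | succ t IHt =>
      obtain ⟨l, hl, hbnd, e1, e0, e2, e3⟩ := IHt
      set s := t + 1 with hs
      -- value 2s+2 at position m+3+s
      have h1 := h (2*s+2) (by have := A_lt_iff (σ := σ) (j := m+3+s); omega)
      have step1 : ∃ l', l' + 1 = l ∧ A σ l' = 2*s+3 := by
        rcases h1 with ⟨j, hj, hA, hd⟩ | ⟨j, hj, hd⟩
        · have hjm : j + 1 = m + 3 + s := A_inj σ (by omega) (by omega) (by rw [hA, e3])
          have hj2 : A σ j = 2*s := by rw [show j = m + 2 + s by omega, e2]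
          rcases hd with hc | hc
          · have : j + 2 = l + 1 := A_inj σ (by omega) (by omega)
              (by rw [e1]; omega)
            omega
          · have : j + 2 = l := A_inj σ (by omega) (by omega) (by rw [e0]; omega)
            omega
        · rcases hd with ⟨hc1, hc2⟩ | ⟨hc1, hc2⟩
          · -- A σ j = 2s+3 ∧ A σ (j+1) = 2s+1 = A σ l
            have : j + 1 = l := A_inj σ (by omega) (by omega) (by rw [e0]; omega)
            exact ⟨j, this, by omega⟩
          · -- A σ (j+1) = 2s+3 ∧ A σ j = 2s+1
            have : j = l := A_inj σ (by omega) (by omega) (by rw [e0]; omega)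
            have : A σ (l+1) = 2*s+3 := by rw [show l+1 = j+1 by omega]; omega
            omega
      obtain ⟨l', hl', f0⟩ := step1
      -- value 2s+3 at position l'
      have h2' := h (2*s+3) (by have := A_lt_iff (σ := σ) (j := l'); omega)
      have step2 : A σ (m+4+s) = 2*s+4 ∧ m+4+s < n := by
        rcases h2' with ⟨j, hj, hA, hd⟩ | ⟨j, hj, hd⟩
        · have hjm : j + 1 = l' := A_inj σ (by omega) (by omega) (by rw [hA, f0])
          have hj2 : A σ (j+2) = 2*s+1 := by rw [show j+2 = l by omega, e0]
          rcases hd with hc | hc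
          · have : j = m + 3 + s := A_inj σ (by omega) (by omega) (by rw [e3]; omega)
            omega
          · have : j = m + 2 + s := A_inj σ (by omega) (by omega) (by rw [e2]; omega)
            omega
        · rcases hd with ⟨hc1, hc2⟩ | ⟨hc1, hc2⟩
          · have : j + 1 = m + 3 + s := A_inj σ (by omega) (by omega) (by rw [e3]; omega)
            have : A σ (m+2+s) = 2*s+4 := by rw [show m+2+s = j by omega]; omega
            omega
          · have : j = m + 3 + s := A_inj σ (by omega) (by omega) (by rw [e3]; omega)
            have : A σ (m+4+s) = 2*s+4 := by rw [show m+4+s = j+1 by omega]; omega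
            exact ⟨this, by omega⟩
      refine ⟨l', by omega, by omega, ?_, ?_, ?_, ?_⟩
      · rw [show l'+1 = l by omega]; omega
      · omega
      · rw [show m+2+(t+1+1) = m+3+s by omega]; omega
      · rw [show m+3+(t+1+1) = m+4+s by omega]; omega
  obtain ⟨l, hl, -⟩ := C (m+1)
  omega

/-- Core local analysis at the position of value 0, oriented case. -/
lemma caseY {σ : Equiv.Perm (Fin n)} (h : Good σ) {j₀ : ℕ} (hj : j₀ + 2 < n)
    (h0 : A σ (j₀+1) = 0) (hxy : A σ (j₀+2) = A σ j₀ + 1) :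
    j₀ + 3 < n ∧ A σ j₀ = 2 ∧ A σ (j₀+2) = 3 ∧ A σ (j₀+3) = 1 := by
  set x := A σ j₀ with hx
  have hxn : x < n := by have := A_lt σ (show j₀ < n by omega); omega
  have hx1n : x + 1 < n := by have := A_lt σ hj; omega
  have hxpos : 0 < x := by
    rcases Nat.eq_zero_or_pos x with h' | h'
    · have hcon : j₀ = j₀ + 1 := A_inj σ (by omega) (by omega) (by rw [h0, ← hx, h'])
      omega
    · exact h'
  -- D1 : analysis of value x (at position j₀)
  have D1 : (∃ j, j + 1 = j₀ ∧ A σ j = 1) ∨ x = 1 ∨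
      (j₀ + 3 < n ∧ A σ (j₀+3) + 1 = x) := by
    rcases h x hxn with ⟨j, hj2, hA, hd⟩ | ⟨j, hj2, hd⟩
    · have hje : j + 1 = j₀ := A_inj σ (by omega) (by omega) (by rw [hA])
      have : A σ (j+2) = 0 := by rw [show j + 2 = j₀ + 1 by omega, h0]
      left; exact ⟨j, hje, by omega⟩
    · rcases hd with ⟨hc1, hc2⟩ | ⟨hc1, hc2⟩
      · have : j = j₀ + 2 := A_inj σ (by omega) (by omega) (by rw [hc1, hxy])
        right; right
        refine ⟨by omega, by rw [show j₀+3 = j+1 by omega]; omega⟩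
      · have : j + 1 = j₀ + 2 := A_inj σ (by omega) (by omega) (by rw [hc1, hxy])
        have : A σ (j₀+1) + 1 = x := by rw [show j₀+1 = j by omega]; omega
        right; left; omega
  -- D2 : analysis of value x+1 (at position j₀+2)
  have D2 : (j₀ + 3 < n ∧ A σ (j₀+3) = 1) ∨ (∃ j, j + 1 = j₀ ∧ A σ j = x + 2) := by
    rcases h (x+1) hx1n with ⟨j, hj2, hA, hd⟩ | ⟨j, hj2, hd⟩
    · have hje : j + 1 = j₀ + 2 := A_inj σ (by omega) (by omega) (by rw [hA, hxy])
      have hz : A σ j = 0 := by rw [show j = j₀ + 1 by omega, h0]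
      left
      refine ⟨by omega, ?_⟩
      rw [show j₀ + 3 = j + 2 by omega]
      omega
    · rcases hd with ⟨hc1, hc2⟩ | ⟨hc1, hc2⟩
      · -- A σ j = x+2 ∧ A σ (j+1) = x
        have : j + 1 = j₀ := A_inj σ (by omega) (by omega) (by rw [← hx]; omega)
        right; exact ⟨j, this, by omega⟩
      · -- A σ j = x , A σ (j+1) = x+2
        have : j = j₀ := A_inj σ (by omega) (by omega) (by rw [← hx]; omega)
        have : A σ (j₀+1) = x + 2 := by rw [show j₀+1 = j+1 by omega]; omega
        omega
  rcases D1 with ⟨j, hje, hv⟩ | hx1 | ⟨hbnd, hv⟩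
  · rcases D2 with ⟨hbnd2, hv2⟩ | ⟨j', hje', hv'⟩
    · have hcon : j = j₀ + 3 := A_inj σ (by omega) (by omega) (by rw [hv, hv2])
      omega
    · have hjj : j = j' := by omega
      rw [hjj] at hv
      omega
  · rcases D2 with ⟨hbnd2, hv2⟩ | ⟨j', hje', hv'⟩
    · have hcon : j₀ + 3 = j₀ := A_inj σ (by omega) (by omega) (by rw [hv2, ← hx]; omega)
      omega
    · -- zigzag : positions j' , j₀ , j₀+1 , j₀+2 carry 3 , 1 , 0 , 2
      exact absurd (zigzag h (show j' + 3 < n by omega)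
        (by rw [hv', hx1]) (by rw [show j'+1 = j₀ by omega, ← hx, hx1])
        (by rw [show j'+2 = j₀+1 by omega, h0])
        (by rw [show j'+3 = j₀+2 by omega, hxy, hx1])) (fun f => f)
  · rcases D2 with ⟨hbnd2, hv2⟩ | ⟨j', hje', hv'⟩
    · -- x = 2 and conclusion
      have hx2 : x = 2 := by omega
      exact ⟨hbnd, by omega, by omega, hv2⟩
    · -- A σ (j₀+3) = x - 1 , A σ j' = x+2 with j'+1 = j₀
      rcases Nat.lt_or_ge x 3 with hlt | hge
      · -- x = 1 impossible , x = 2 gives conclusion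
        rcases Nat.lt_or_ge x 2 with h1 | h2
        · -- x = 1 : A σ (j₀+3) = 0 = A σ (j₀+1)
          have : j₀ + 3 = j₀ + 1 := A_inj σ (by omega) (by omega) (by rw [h0]; omega)
          omega
        · have hx2 : x = 2 := by omega
          exact ⟨hbnd, by omega, by omega, by omega⟩
      · -- x ≥ 3 : contradiction via value x - 1 at j₀+3
        exfalso
        have hy : A σ (j₀+3) = x - 1 := by omega
        rcases h (x-1) (by omega) with ⟨j, hj2, hA, hd⟩ | ⟨j, hj2, hd⟩
        · have hje2 : j + 1 = j₀ + 3 := A_inj σ (by omega) (by omega)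
            (by rw [hA, hy])
          have : A σ j = x + 1 := by rw [show j = j₀+2 by omega, hxy]
          rcases hd with hc | hc
          · have : j + 2 = j₀ := A_inj σ (by omega) (by omega) (by rw [← hx]; omega)
            omega
          · have : j + 2 = j' := A_inj σ (by omega) (by omega) (by rw [hv']; omega)
            omega
        · rcases hd with ⟨hc1, hc2⟩ | ⟨hc1, hc2⟩
          · -- A σ j = x ∧ A σ (j+1) = x - 2
            have : j = j₀ := A_inj σ (by omega) (by omega) (by rw [← hx]; omega)
            have : A σ (j₀+1) + 1 = x - 1 := by rw [show j₀+1 = j+1 by omega]; omega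
            omega
          · have : j + 1 = j₀ := A_inj σ (by omega) (by omega) (by rw [← hx]; omega)
            have : A σ j' + 1 = x - 1 := by rw [show j' = j by omega]; omega
            omega

lemma A_rev {σ : Equiv.Perm (Fin n)} {j : ℕ} (hj : j < n) :
    A (Fin.revPerm.trans σ) j = A σ (n - 1 - j) := by
  have h2 : n - 1 - j < n := by omega
  simp only [A, dif_pos hj, dif_pos h2, Equiv.trans_apply, Fin.revPerm_apply]
  congr 2
  simp [Fin.rev]
  omega

lemma good_rev {σ : Equiv.Perm (Fin n)} (h : Good σ) : Good (Fin.revPerm.trans σ) := by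
  intro b hb
  rcases h b hb with ⟨j, hj, hA, hd⟩ | ⟨j, hj, hd⟩
  · left
    refine ⟨n - 3 - j, by omega, ?_, ?_⟩
    · rw [A_rev (by omega), show n - 1 - (n - 3 - j + 1) = j + 1 by omega]; exact hA
    · rw [A_rev (by omega), A_rev (by omega), show n - 1 - (n - 3 - j) = j + 2 by omega,
        show n - 1 - (n - 3 - j + 2) = j by omega]
      tauto
  · right
    refine ⟨n - 2 - j, by omega, ?_⟩
    rw [A_rev (by omega), A_rev (by omega), show n - 1 - (n - 2 - j) = j + 1 by omega,
      show n - 1 - (n - 2 - j + 1) = j by omega]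
    tauto

/-- The values 0,1,2,3 form a pattern block. -/
lemma val0block {σ : Equiv.Perm (Fin n)} (h : Good σ) (hn : 0 < n) :
    ∃ q, q + 3 < n ∧
      ((A σ q = 2 ∧ A σ (q+1) = 0 ∧ A σ (q+2) = 3 ∧ A σ (q+3) = 1) ∨
       (A σ q = 1 ∧ A σ (q+1) = 3 ∧ A σ (q+2) = 0 ∧ A σ (q+3) = 2)) := by
  rcases h 0 hn with ⟨j₀, hj, hA, hd⟩ | ⟨j, hj, hd⟩
  · rcases hd with hc | hc
    · -- A σ j₀ = A σ (j₀+2) + 1 : reversed case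
      set σr := Fin.revPerm.trans σ with hσr
      have hr : Good σr := good_rev h
      have e0 : A σr (n - 3 - j₀ + 1) = 0 := by
        rw [hσr, A_rev (by omega), show n - 1 - (n - 3 - j₀ + 1) = j₀ + 1 by omega, hA]
      have exy : A σr (n - 3 - j₀ + 2) = A σr (n - 3 - j₀) + 1 := by
        rw [hσr, A_rev (by omega), A_rev (by omega),
          show n - 1 - (n - 3 - j₀ + 2) = j₀ by omega,
          show n - 1 - (n - 3 - j₀) = j₀ + 2 by omega]
        omega
      obtain ⟨hbnd, v0, v2, v3⟩ := caseY hr (by omega) e0 exy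
      -- n - 3 - j₀ + 3 < n gives j₀ ≥ 1
      have hj1 : 1 ≤ j₀ := by omega
      rw [hσr, A_rev (by omega), show n - 1 - (n - 3 - j₀) = j₀ + 2 by omega] at v0
      rw [hσr, A_rev (by omega), show n - 1 - (n - 3 - j₀ + 2) = j₀ by omega] at v2
      rw [hσr, A_rev (by omega), show n - 1 - (n - 3 - j₀ + 3) = j₀ - 1 by omega] at v3
      refine ⟨j₀ - 1, by omega, Or.inr ⟨v3, ?_, ?_, ?_⟩⟩
      · rw [show j₀ - 1 + 1 = j₀ by omega]; exact v2
      · rw [show j₀ - 1 + 2 = j₀ + 1 by omega]; exact hA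
      · rw [show j₀ - 1 + 3 = j₀ + 2 by omega]; exact v0
    · obtain ⟨hbnd, v0, v2, v3⟩ := caseY h hj hA (by omega)
      exact ⟨j₀, hbnd, Or.inl ⟨v0, hA, v2, v3⟩⟩
  · -- Ph 0 impossible
    exact absurd hd (by omega)

section Reduction

variable {σ : Equiv.Perm (Fin n)} {q : ℕ}

/-- block hypothesis -/
def IsBlk (σ : Equiv.Perm (Fin n)) (q : ℕ) : Prop :=
  q + 3 < n ∧
  ((A σ q = 2 ∧ A σ (q+1) = 0 ∧ A σ (q+2) = 3 ∧ A σ (q+3) = 1) ∨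
   (A σ q = 1 ∧ A σ (q+1) = 3 ∧ A σ (q+2) = 0 ∧ A σ (q+3) = 2))

lemma small_iff (hb : IsBlk σ q) : ∀ z, z < n → (A σ z < 4 ↔ (q ≤ z ∧ z ≤ q + 3)) := by
  obtain ⟨hq, hp⟩ := hb
  intro z hz
  constructor
  · intro h4
    by_contra hout
    have h0 : A σ z = 0 ∨ A σ z = 1 ∨ A σ z = 2 ∨ A σ z = 3 := by omega
    rcases hp with ⟨p0, p1, p2, p3⟩ | ⟨p0, p1, p2, p3⟩ <;>
      rcases h0 with hv | hv | hv | hv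
    · have : z = q + 1 := A_inj σ hz (by omega) (by rw [hv, p1]); omega
    · have : z = q + 3 := A_inj σ hz (by omega) (by rw [hv, p3]); omega
    · have : z = q := A_inj σ hz (by omega) (by rw [hv, p0]); omega
    · have : z = q + 2 := A_inj σ hz (by omega) (by rw [hv, p2]); omega
    · have : z = q + 2 := A_inj σ hz (by omega) (by rw [hv, p2]); omega
    · have : z = q := A_inj σ hz (by omega) (by rw [hv, p0]); omega
    · have : z = q + 3 := A_inj σ hz (by omega) (by rw [hv, p3]); omega
    · have : z = q + 1 := A_inj σ hz (by omega) (by rw [hv, p1]); omega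
  · intro hin
    have h1 : z = q ∨ z = q + 1 ∨ z = q + 2 ∨ z = q + 3 := by omega
    rcases hp with ⟨p0, p1, p2, p3⟩ | ⟨p0, p1, p2, p3⟩ <;>
      rcases h1 with rfl | rfl | rfl | rfl <;> omega

lemma A_symm_val (σ : Equiv.Perm (Fin n)) {v : ℕ} (hv : v < n) :
    A σ ((σ.symm ⟨v, hv⟩).val) = v := by
  simp only [A, dif_pos (Fin.is_lt (σ.symm ⟨v, hv⟩))]
  have h2 : (⟨(σ.symm ⟨v, hv⟩).val, Fin.is_lt _⟩ : Fin n) = σ.symm ⟨v, hv⟩ := Fin.ext rfl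
  rw [h2, Equiv.apply_symm_apply]

lemma blk_out (hb : IsBlk σ q) {z : ℕ} (hz : z < n) (ho : z < q ∨ q + 3 < z) :
    4 ≤ A σ z ∧ A σ z < n := by
  have := small_iff hb z hz
  have := A_lt σ hz
  omega

/-- delete the block of values 0..3 (at positions q..q+3) and standardize -/
def redFun (σ : Equiv.Perm (Fin n)) (q : ℕ) (hb : IsBlk σ q) (i : Fin (n-4)) : Fin (n-4) :=
  ⟨A σ (if i.val < q then i.val else i.val + 4) - 4, by
    have hq := hb.1
    have hi := i.isLt
    by_cases hc : i.val < q
    · simp only [if_pos hc]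
      have := blk_out hb (show i.val < n by omega) (Or.inl hc)
      omega
    · simp only [if_neg hc]
      have := blk_out hb (show i.val + 4 < n by omega) (Or.inr (by omega))
      omega⟩

lemma redFun_inj (σ : Equiv.Perm (Fin n)) (q : ℕ) (hb : IsBlk σ q) :
    Function.Injective (redFun σ q hb) := by
  intro i j hij
  have hq := hb.1
  have hi := i.isLt
  have hj := j.isLt
  have h1 : A σ (if i.val < q then i.val else i.val + 4) - 4
      = A σ (if j.val < q then j.val else j.val + 4) - 4 := congrArg Fin.val hij
  have oi : 4 ≤ A σ (if i.val < q then i.val else i.val + 4) ∧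
      A σ (if i.val < q then i.val else i.val + 4) < n := by
    split <;> [exact blk_out hb (by omega) (Or.inl (by omega));
      exact blk_out hb (by omega) (Or.inr (by omega))]
  have oj : 4 ≤ A σ (if j.val < q then j.val else j.val + 4) ∧
      A σ (if j.val < q then j.val else j.val + 4) < n := by
    split <;> [exact blk_out hb (by omega) (Or.inl (by omega));
      exact blk_out hb (by omega) (Or.inr (by omega))]
  have h2 : A σ (if i.val < q then i.val else i.val + 4)
      = A σ (if j.val < q then j.val else j.val + 4) := by omega
  have h3 := A_inj σ (by split <;> omega) (by split <;> omega) h2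
  apply Fin.ext
  revert h3
  split <;> split <;> omega

noncomputable def redPerm (σ : Equiv.Perm (Fin n)) (q : ℕ) (hb : IsBlk σ q) : Equiv.Perm (Fin (n-4)) :=
  Equiv.ofBijective _ (Finite.injective_iff_bijective.mp (redFun_inj σ q hb))

lemma red_A (hb : IsBlk σ q) {i : ℕ} (hi : i < n - 4) :
    A (redPerm σ q hb) i = A σ (if i < q then i else i + 4) - 4 := by
  simp only [A, dif_pos hi, redPerm, Equiv.ofBijective_apply, redFun]

lemma good_red (hb : IsBlk σ q) (h : Good σ) : Good (redPerm σ q hb) := by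
  have hq := hb.1
  intro b' hb'
  have hbn : b' + 4 < n := by omega
  rcases h (b' + 4) hbn with ⟨j, hj, hA, hd⟩ | ⟨j, hj, hd⟩
  · -- vertical witness
    have hj1out : ¬ (q ≤ j + 1 ∧ j + 1 ≤ q + 3) := by
      intro hin
      have := (small_iff hb (j+1) (by omega)).2 hin
      omega
    by_cases hc1 : j + 2 = q
    · -- A σ (j+2) ∈ {1,2} so A σ j < 4 , so j in block : contra
      exfalso
      have hsq : A σ q = 1 ∨ A σ q = 2 := by rcases hb.2 with ⟨p,_⟩|⟨p,_⟩ <;> omega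
      have : A σ j < 4 := by rw [← hc1] at hsq; omega
      have := (small_iff hb j (by omega)).1 this
      omega
    · by_cases hc2 : j = q + 3
      · exfalso
        have hsq : A σ (q+3) = 1 ∨ A σ (q+3) = 2 := by
          rcases hb.2 with ⟨_,_,_,p⟩|⟨_,_,_,p⟩ <;> omega
        have : A σ (j+2) < 4 := by rw [hc2]; rw [hc2] at hd; omega
        have := (small_iff hb (j+2) (by omega)).1 this
        omega
      · -- the three positions avoid the block entirely
        have htri : (j + 2 < q) ∨ (q + 3 < j) := by
          by_contra hcon
          push_neg at hcon
          -- j+1 not in block , j+2 ≠ q , j ≠ q+3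
          omega
        left
        rcases htri with hlt | hgt
        · refine ⟨j, by omega, ?_, ?_⟩
          · rw [red_A hb (by omega), if_pos (by omega)]
            omega
          · rw [red_A hb (by omega), red_A hb (by omega), if_pos (by omega),
              if_pos (by omega)]
            have o1 := blk_out hb (show j < n by omega) (Or.inl (by omega))
            have o2 := blk_out hb (show j + 2 < n by omega) (Or.inl (by omega))
            omega
        · refine ⟨j - 4, by omega, ?_, ?_⟩
          · rw [red_A hb (by omega), if_neg (by omega), show j - 4 + 1 + 4 = j + 1 by omega]
            omega
          · rw [red_A hb (by omega), red_A hb (by omega), if_neg (by omega),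
              if_neg (by omega), show j - 4 + 4 = j by omega,
              show j - 4 + 2 + 4 = j + 2 by omega]
            have o1 := blk_out hb (show j < n by omega) (Or.inr (by omega))
            have o2 := blk_out hb (show j + 2 < n by omega) (Or.inr (by omega))
            omega
  · -- horizontal witness
    by_cases hb4 : b' = 0
    · -- b = 4 : impossible , value 3 is interior to the block with small neighbours
      exfalso
      subst hb4
      have h3pos : ∀ z, z < n → A σ z = 3 →
          (z = q + 2 ∧ A σ (q+1) = 0 ∧ A σ (q+3) = 1) ∨
          (z = q + 1 ∧ A σ q = 1 ∧ A σ (q+2) = 0) := by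
        intro z hz hv
        rcases hb.2 with ⟨p0,p1,p2,p3⟩ | ⟨p0,p1,p2,p3⟩
        · left
          exact ⟨A_inj σ hz (by omega) (by rw [hv, p2]), p1, p3⟩
        · right
          exact ⟨A_inj σ hz (by omega) (by rw [hv, p1]), p0, p2⟩
      rcases hd with ⟨hc1, hc2⟩ | ⟨hc1, hc2⟩
      · -- A σ j = 5 , A σ (j+1) = 3
        rcases h3pos (j+1) (by omega) (by omega) with ⟨he, v1, v2⟩ | ⟨he, v1, v2⟩
        · have hj' : j = q + 1 := by omega
          rw [hj'] at hc1
          omega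
        · have hj' : j = q := by omega
          rw [hj'] at hc1
          omega
      · rcases h3pos j (by omega) (by omega) with ⟨he, v1, v2⟩ | ⟨he, v1, v2⟩
        · have : A σ (j+1) = 1 := by rw [show j + 1 = q + 3 by omega]; exact v2
          omega
        · have : A σ (j+1) = 0 := by rw [show j + 1 = q + 2 by omega]; exact v2
          omega
    · -- b ≥ 5 : both values ≥ 4 , positions outside block
      have hjout : j < q ∨ q + 3 < j := by
        by_contra hcon
        have := (small_iff hb j (by omega)).2 (by omega)
        omega
      have hj1out : j + 1 < q ∨ q + 3 < j + 1 := by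
        by_contra hcon
        have := (small_iff hb (j+1) (by omega)).2 (by omega)
        omega
      right
      rcases hjout with hc | hc
      · have hc' : j + 1 < q ∨ j + 1 = q := by omega
        have hcq : j + 1 < q := by
          rcases hc' with h' | h'
          · exact h'
          · exfalso
            have := (small_iff hb (j+1) (by omega)).2 (by omega)
            omega
        refine ⟨j, by omega, ?_⟩
        rw [red_A hb (by omega), red_A hb (by omega), if_pos (by omega), if_pos (by omega)]
        have o1 := blk_out hb (show j < n by omega) (Or.inl (by omega))
        have o2 := blk_out hb (show j + 1 < n by omega) (Or.inl (by omega))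
        omega
      · have hcq : q + 3 < j := by omega
        refine ⟨j - 4, by omega, ?_⟩
        rw [red_A hb (by omega), red_A hb (by omega), if_neg (by omega), if_neg (by omega),
          show j - 4 + 4 = j by omega, show j - 4 + 1 + 4 = j + 1 by omega]
        have o1 := blk_out hb (show j < n by omega) (Or.inr (by omega))
        have o2 := blk_out hb (show j + 1 < n by omega) (Or.inr (by omega))
        omega

end Reduction

lemma pat0 (e : Bool) : pat e 0 = 1 ∨ pat e 0 = 2 := by cases e <;> simp [pat]
lemma pat3 (e : Bool) : pat e 3 = 1 ∨ pat e 3 = 2 := by cases e <;> simp [pat]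

lemma valform {σ : Equiv.Perm (Fin n)} {q : ℕ} (hb : IsBlk σ q)
    {π' : Equiv.Perm (Fin ((n-4)/4))} {ε' : Fin ((n-4)/4) → Bool}
    (hσ' : redPerm σ q hb = inflPerm (n-4) π' ε')
    {z i r : ℕ} (hz : z < n) (hr : r < 4) (hi : i < (n-4)/4)
    (he : (z < q ∧ 4*i+r = z) ∨ (q + 3 < z ∧ 4*i+r+4 = z)) :
    A σ z = 4 * (π' ⟨i, hi⟩).val + 4 + pat (ε' ⟨i, hi⟩) r := by
  have hq := hb.1
  have h4 : 4 * ((n-4)/4) ≤ n - 4 := Nat.mul_div_le _ 4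
  have hd : 4*i + r < n - 4 := by omega
  have e1 : A (redPerm σ q hb) (4*i+r) = A σ (if 4*i+r < q then 4*i+r else 4*i+r + 4) - 4 :=
    red_A hb hd
  rw [hσ', infl_apply π' ε' hi hr] at e1
  have e2 : (if 4*i+r < q then 4*i+r else 4*i+r + 4) = z := by
    rcases he with ⟨h1, h2⟩ | ⟨h1, h2⟩
    · rw [if_pos (by omega)]; exact h2
    · rw [if_neg (by omega)]; exact h2
  rw [e2] at e1
  have hout : z < q ∨ q + 3 < z := by rcases he with ⟨h1,-⟩|⟨h1,-⟩ <;> omega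
  have := blk_out hb hz hout
  omega

lemma align {σ : Equiv.Perm (Fin n)} {q : ℕ} (h : Good σ) (hb : IsBlk σ q)
    {π' : Equiv.Perm (Fin ((n-4)/4))} {ε' : Fin ((n-4)/4) → Bool}
    (hm : (n-4) % 4 = 0) (hσ' : redPerm σ q hb = inflPerm (n-4) π' ε') :
    q % 4 = 0 := by
  by_contra hr0
  have hq := hb.1
  have h4 : 4 * ((n-4)/4) ≤ n - 4 := Nat.mul_div_le _ 4
  have h44 : 4 * ((n-4)/4) = n - 4 := by omega
  obtain ⟨u, r, hqur, hrr⟩ : ∃ u r, q = 4*u + r ∧ (r = 1 ∨ r = 2 ∨ r = 3) :=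
    ⟨q/4, q%4, by omega, by omega⟩
  clear hr0
  have huK : u < (n-4)/4 := by omega
  set pu := (π' ⟨u, huK⟩).val with hpu
  have hpuK : pu < (n-4)/4 := (π' ⟨u, huK⟩).isLt
  have hwn : 4*pu + 4 + 3 < n := by omega
  -- the four split-block value facts
  have La : ∀ t, t < 4 → A σ (if 4*u+t < q then 4*u+t else 4*u+t+4)
      = 4*pu + 4 + pat (ε' ⟨u, huK⟩) t := by
    intro t ht
    have hzn : (if 4*u+t < q then (4*u+t:ℕ) else 4*u+t+4) < n := by split <;> omega
    refine valform hb hσ' hzn ht huK ?_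
    by_cases hc : 4*u+t < q
    · rw [if_pos hc]; left; exact ⟨hc, rfl⟩
    · rw [if_neg hc]; right; exact ⟨by omega, rfl⟩
  -- residue facts at positions 4u+8 and 4u-1
  have F8 : 4*u + 8 < n → r ≤ 2 →
      A σ (4*u+8) ≠ 4*pu+3 ∧ A σ (4*u+8) ≠ 4*pu+8 := by
    intro h8 hr12
    have hiK : u + 1 < (n-4)/4 := by omega
    have hv := valform hb hσ' (show 4*u+8 < n from h8) (show (0:ℕ) < 4 by omega) hiK
      (Or.inr ⟨by omega, by ring⟩)
    rcases pat0 (ε' ⟨u+1, hiK⟩) with hp | hp <;> rw [hp] at hv <;> omega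
  have Fm : 1 ≤ u → A σ (4*u-1) ≠ 4*pu+5 ∧ A σ (4*u-1) ≠ 4*pu+3 := by
    intro hu1
    have hiK : u - 1 < (n-4)/4 := by omega
    have hv := valform hb hσ' (show 4*u-1 < n by omega) (show (3:ℕ) < 4 by omega) hiK
      (Or.inl ⟨by omega, by omega⟩)
    have hne : (π' ⟨u-1, hiK⟩).val ≠ pu := by
      intro hcon
      have h1 : (⟨u-1, hiK⟩ : Fin ((n-4)/4)) = ⟨u, huK⟩ := π'.injective (Fin.ext hcon)
      have h2 := congrArg Fin.val h1
      simp only [Fin.val_mk] at h2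
      omega
    have hPK := (π' ⟨u-1, hiK⟩).isLt
    rcases pat3 (ε' ⟨u-1, hiK⟩) with hp | hp <;> rw [hp] at hv <;> omega
  -- block end values
  have hBq : A σ q = 1 ∨ A σ q = 2 := by rcases hb.2 with ⟨p,_⟩|⟨p,_⟩ <;> omega
  have hBq3 : A σ (q+3) = 1 ∨ A σ (q+3) = 2 := by
    rcases hb.2 with ⟨_,_,_,p⟩|⟨_,_,_,p⟩ <;> omega
  cases he : ε' ⟨u, huK⟩ <;> rcases hrr with hr | hr | hr
  -- ε = false , r = 1 : block (w+2 | w , w+3 , w+1) , broken value w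
  · have P0 : A σ (4*u) = 4*pu+4+2 := by
      have := La 0 (by omega); rw [if_pos (by omega), he] at this; simpa [pat] using this
    have P1 : A σ (4*u+5) = 4*pu+4 := by
      have := La 1 (by omega); rw [if_neg (by omega), he] at this
      simpa [pat, show 4*u+1+4 = 4*u+5 by omega] using this
    have P2 : A σ (4*u+6) = 4*pu+4+3 := by
      have := La 2 (by omega); rw [if_neg (by omega), he] at this
      simpa [pat, show 4*u+2+4 = 4*u+6 by omega] using this
    have P3 : A σ (4*u+7) = 4*pu+4+1 := by
      have := La 3 (by omega); rw [if_neg (by omega), he] at this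
      simpa [pat, show 4*u+3+4 = 4*u+7 by omega] using this
    have Bq3 : A σ (4*u+4) = 1 ∨ A σ (4*u+4) = 2 := by
      rw [show 4*u+4 = q+3 by omega]; exact hBq3
    rcases h (4*pu+4) (by omega) with ⟨j, hj, hA, hd⟩ | ⟨j, hj, hd⟩
    · have hje : j + 1 = 4*u+5 := A_inj σ (by omega) (by omega) (by rw [hA, P1])
      rw [show j = 4*u+4 by omega, show 4*u+4+2 = 4*u+6 by omega] at hd
      omega
    · rcases hd with ⟨hc1, hc2⟩ | ⟨hc1, hc2⟩
      · have hje : j = 4*u+7 := A_inj σ (by omega) (by omega) (by rw [hc1, P3])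
        rw [hje, show 4*u+7+1 = 4*u+8 by omega] at hc2
        have hF := F8 (by omega) (by omega)
        omega
      · have hje : j + 1 = 4*u+7 := A_inj σ (by omega) (by omega) (by rw [hc1, P3])
        rw [show j = 4*u+6 by omega] at hc2
        omega
  -- ε = false , r = 2 : block (w+2 , w | w+3 , w+1) , broken value w
  · have P0 : A σ (4*u) = 4*pu+4+2 := by
      have := La 0 (by omega); rw [if_pos (by omega), he] at this; simpa [pat] using this
    have P1 : A σ (4*u+1) = 4*pu+4 := by
      have := La 1 (by omega); rw [if_pos (by omega), he] at this; simpa [pat] using this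
    have P2 : A σ (4*u+6) = 4*pu+4+3 := by
      have := La 2 (by omega); rw [if_neg (by omega), he] at this
      simpa [pat, show 4*u+2+4 = 4*u+6 by omega] using this
    have P3 : A σ (4*u+7) = 4*pu+4+1 := by
      have := La 3 (by omega); rw [if_neg (by omega), he] at this
      simpa [pat, show 4*u+3+4 = 4*u+7 by omega] using this
    have Bq : A σ (4*u+2) = 1 ∨ A σ (4*u+2) = 2 := by
      rw [show 4*u+2 = q by omega]; exact hBq
    rcases h (4*pu+4) (by omega) with ⟨j, hj, hA, hd⟩ | ⟨j, hj, hd⟩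
    · have hje : j + 1 = 4*u+1 := A_inj σ (by omega) (by omega) (by rw [hA, P1])
      rw [show j = 4*u by omega, show 4*u+2 = 4*u+2 by omega] at hd
      omega
    · rcases hd with ⟨hc1, hc2⟩ | ⟨hc1, hc2⟩
      · have hje : j = 4*u+7 := A_inj σ (by omega) (by omega) (by rw [hc1, P3])
        rw [hje, show 4*u+7+1 = 4*u+8 by omega] at hc2
        have hF := F8 (by omega) (by omega)
        omega
      · have hje : j + 1 = 4*u+7 := A_inj σ (by omega) (by omega) (by rw [hc1, P3])
        rw [show j = 4*u+6 by omega] at hc2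
        omega
  -- ε = false , r = 3 : block (w+2 , w , w+3 | w+1) , broken value w+2
  · have P0 : A σ (4*u) = 4*pu+4+2 := by
      have := La 0 (by omega); rw [if_pos (by omega), he] at this; simpa [pat] using this
    have P1 : A σ (4*u+1) = 4*pu+4 := by
      have := La 1 (by omega); rw [if_pos (by omega), he] at this; simpa [pat] using this
    have P2 : A σ (4*u+2) = 4*pu+4+3 := by
      have := La 2 (by omega); rw [if_pos (by omega), he] at this; simpa [pat] using this
    have P3 : A σ (4*u+7) = 4*pu+4+1 := by
      have := La 3 (by omega); rw [if_neg (by omega), he] at this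
      simpa [pat, show 4*u+3+4 = 4*u+7 by omega] using this
    have Bq : A σ (4*u+3) = 1 ∨ A σ (4*u+3) = 2 := by
      rw [show 4*u+3 = q by omega]; exact hBq
    rcases h (4*pu+4+2) (by omega) with ⟨j, hj, hA, hd⟩ | ⟨j, hj, hd⟩
    · have hje : j + 1 = 4*u := A_inj σ (by omega) (by omega) (by rw [hA, P0])
      have hu1 : 1 ≤ u := by omega
      rw [show j = 4*u-1 by omega, show 4*u-1+2 = 4*u+1 by omega] at hd
      have hF := Fm hu1
      omega
    · rcases hd with ⟨hc1, hc2⟩ | ⟨hc1, hc2⟩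
      · have hje : j = 4*u+2 := A_inj σ (by omega) (by omega) (by rw [hc1, P2])
        rw [hje, show 4*u+2+1 = 4*u+3 by omega] at hc2
        omega
      · have hje : j + 1 = 4*u+2 := A_inj σ (by omega) (by omega) (by rw [hc1, P2])
        rw [show j = 4*u+1 by omega] at hc2
        omega
  -- ε = true , r = 1 : block (w+1 | w+3 , w , w+2) , broken value w+3
  · have P0 : A σ (4*u) = 4*pu+4+1 := by
      have := La 0 (by omega); rw [if_pos (by omega), he] at this; simpa [pat] using this
    have P1 : A σ (4*u+5) = 4*pu+4+3 := by
      have := La 1 (by omega); rw [if_neg (by omega), he] at this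
      simpa [pat, show 4*u+1+4 = 4*u+5 by omega] using this
    have P2 : A σ (4*u+6) = 4*pu+4 := by
      have := La 2 (by omega); rw [if_neg (by omega), he] at this
      simpa [pat, show 4*u+2+4 = 4*u+6 by omega] using this
    have P3 : A σ (4*u+7) = 4*pu+4+2 := by
      have := La 3 (by omega); rw [if_neg (by omega), he] at this
      simpa [pat, show 4*u+3+4 = 4*u+7 by omega] using this
    have Bq3 : A σ (4*u+4) = 1 ∨ A σ (4*u+4) = 2 := by
      rw [show 4*u+4 = q+3 by omega]; exact hBq3
    rcases h (4*pu+4+3) (by omega) with ⟨j, hj, hA, hd⟩ | ⟨j, hj, hd⟩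
    · have hje : j + 1 = 4*u+5 := A_inj σ (by omega) (by omega) (by rw [hA, P1])
      rw [show j = 4*u+4 by omega, show 4*u+4+2 = 4*u+6 by omega] at hd
      omega
    · rcases hd with ⟨hc1, hc2⟩ | ⟨hc1, hc2⟩
      · have hje : j + 1 = 4*u+7 := A_inj σ (by omega) (by omega) (by rw [P3]; omega)
        rw [show j = 4*u+6 by omega] at hc1
        omega
      · have hje : j = 4*u+7 := A_inj σ (by omega) (by omega) (by rw [P3]; omega)
        rw [hje, show 4*u+7+1 = 4*u+8 by omega] at hc1
        have hF := F8 (by omega) (by omega)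
        omega
  -- ε = true , r = 2 : block (w+1 , w+3 | w , w+2) , broken value w+3
  · have P0 : A σ (4*u) = 4*pu+4+1 := by
      have := La 0 (by omega); rw [if_pos (by omega), he] at this; simpa [pat] using this
    have P1 : A σ (4*u+1) = 4*pu+4+3 := by
      have := La 1 (by omega); rw [if_pos (by omega), he] at this; simpa [pat] using this
    have P2 : A σ (4*u+6) = 4*pu+4 := by
      have := La 2 (by omega); rw [if_neg (by omega), he] at this
      simpa [pat, show 4*u+2+4 = 4*u+6 by omega] using this
    have P3 : A σ (4*u+7) = 4*pu+4+2 := by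
      have := La 3 (by omega); rw [if_neg (by omega), he] at this
      simpa [pat, show 4*u+3+4 = 4*u+7 by omega] using this
    have Bq : A σ (4*u+2) = 1 ∨ A σ (4*u+2) = 2 := by
      rw [show 4*u+2 = q by omega]; exact hBq
    rcases h (4*pu+4+3) (by omega) with ⟨j, hj, hA, hd⟩ | ⟨j, hj, hd⟩
    · have hje : j + 1 = 4*u+1 := A_inj σ (by omega) (by omega) (by rw [hA, P1])
      rw [show j = 4*u by omega] at hd
      omega
    · rcases hd with ⟨hc1, hc2⟩ | ⟨hc1, hc2⟩
      · have hje : j + 1 = 4*u+7 := A_inj σ (by omega) (by omega) (by rw [P3]; omega)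
        rw [show j = 4*u+6 by omega] at hc1
        omega
      · have hje : j = 4*u+7 := A_inj σ (by omega) (by omega) (by rw [P3]; omega)
        rw [hje, show 4*u+7+1 = 4*u+8 by omega] at hc1
        have hF := F8 (by omega) (by omega)
        omega
  -- ε = true , r = 3 : block (w+1 , w+3 , w | w+2) , broken value w
  · have P0 : A σ (4*u) = 4*pu+4+1 := by
      have := La 0 (by omega); rw [if_pos (by omega), he] at this; simpa [pat] using this
    have P1 : A σ (4*u+1) = 4*pu+4+3 := by
      have := La 1 (by omega); rw [if_pos (by omega), he] at this; simpa [pat] using this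
    have P2 : A σ (4*u+2) = 4*pu+4 := by
      have := La 2 (by omega); rw [if_pos (by omega), he] at this; simpa [pat] using this
    have P3 : A σ (4*u+7) = 4*pu+4+2 := by
      have := La 3 (by omega); rw [if_neg (by omega), he] at this
      simpa [pat, show 4*u+3+4 = 4*u+7 by omega] using this
    have Bq : A σ (4*u+3) = 1 ∨ A σ (4*u+3) = 2 := by
      rw [show 4*u+3 = q by omega]; exact hBq
    rcases h (4*pu+4) (by omega) with ⟨j, hj, hA, hd⟩ | ⟨j, hj, hd⟩
    · have hje : j + 1 = 4*u+2 := A_inj σ (by omega) (by omega) (by rw [hA, P2])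
      rw [show j = 4*u+1 by omega, show 4*u+1+2 = 4*u+3 by omega] at hd
      omega
    · rcases hd with ⟨hc1, hc2⟩ | ⟨hc1, hc2⟩
      · have hje : j = 4*u := A_inj σ (by omega) (by omega) (by rw [hc1, P0])
        rw [hje] at hc2
        omega
      · have hje : j + 1 = 4*u := A_inj σ (by omega) (by omega) (by rw [hc1, P0])
        have hu1 : 1 ≤ u := by omega
        rw [show j = 4*u-1 by omega] at hc2
        have hF := Fm hu1
        omega

set_option maxHeartbeats 4000000 in
/-- The structure theorem : every Good permutation is an inflation. -/
theorem struct_thm {n : ℕ} (σ : Equiv.Perm (Fin n)) (h : Good σ) :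
    n % 4 = 0 ∧ ∃ (π : Equiv.Perm (Fin (n/4))) (ε : Fin (n/4) → Bool),
      σ = inflPerm n π ε := by
  revert σ
  induction n using Nat.strong_induction_on with
  | _ n IH =>
  intro σ h
  rcases Nat.eq_zero_or_pos n with rfl | hn0
  · exact ⟨rfl, Equiv.refl _, fun _ => false, perm_ext_A (fun j hj => by omega)⟩
  obtain ⟨q, hq3, hpat⟩ := val0block h hn0
  have hblk : IsBlk σ q := ⟨hq3, hpat⟩
  obtain ⟨hm4, π', ε', hσ'⟩ := IH (n-4) (by omega) (redPerm σ q hblk) (good_red hblk h)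
  have hq0 : q % 4 = 0 := align h hblk hm4 hσ'
  have hn4 : n % 4 = 0 := by omega
  refine ⟨hn4, ?_⟩
  have h4 : 4 * ((n-4)/4) ≤ n - 4 := Nat.mul_div_le _ 4
  have h44 : 4 * ((n-4)/4) = n - 4 := by omega
  have hk : n / 4 = (n-4)/4 + 1 := by omega
  have hqU : q = 4 * (q/4) := by omega
  have hUK : q/4 ≤ (n-4)/4 := by omega
  -- the inserted-block pattern bit
  set εb : Bool := if A σ q = 1 then true else false with hεb
  -- the outer permutation
  set f : Fin (n/4) → Fin (n/4) := fun i =>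
    if h1 : i.val < (q/4) then
      ⟨(π' ⟨i.val, by omega⟩).val + 1, by
        have := (π' ⟨i.val, (by omega : i.val < ((n-4)/4))⟩).isLt; omega⟩
    else if h2 : i.val = (q/4) then ⟨0, by omega⟩
    else
      ⟨(π' ⟨i.val - 1, by have := i.isLt; omega⟩).val + 1, by
        have := (π' ⟨i.val - 1, (by have := i.isLt; omega : i.val - 1 < ((n-4)/4))⟩).isLt; omega⟩
    with hf
  have hfv1 : ∀ (av : ℕ) (hav : av < n/4) (hpf : av < ((n-4)/4)), av < (q/4) →
      (f ⟨av, hav⟩).val = (π' ⟨av, hpf⟩).val + 1 := by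
    intro av hav hpf h1
    simp only [hf]
    rw [dif_pos h1]
  have hfv2 : ∀ (av : ℕ) (hav : av < n/4), av = q/4 → (f ⟨av, hav⟩).val = 0 := by
    intro av hav h2
    simp only [hf]
    rw [dif_neg (by omega), dif_pos h2]
  have hfv3 : ∀ (av : ℕ) (hav : av < n/4) (hpf : av - 1 < ((n-4)/4)), (q/4) < av →
      (f ⟨av, hav⟩).val = (π' ⟨av - 1, hpf⟩).val + 1 := by
    intro av hav hpf h1
    simp only [hf]
    rw [dif_neg (by omega), dif_neg (by omega)]
  have hfinj : Function.Injective f := by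
    intro a b hab
    have hav := a.isLt
    have hbv := b.isLt
    have hveq := congrArg Fin.val hab
    apply Fin.ext
    rcases Nat.lt_trichotomy a.val (q/4) with ha | ha | ha <;>
      rcases Nat.lt_trichotomy b.val (q/4) with hb | hb | hb
    · rw [hfv1 a.val a.isLt (by omega) ha, hfv1 b.val b.isLt (by omega) hb] at hveq
      have := π'.injective (Fin.ext (show ((π' ⟨a.val, by omega⟩).val : ℕ)
        = (π' ⟨b.val, by omega⟩).val by omega))
      simpa using congrArg Fin.val this
    · rw [hfv1 a.val a.isLt (by omega) ha, hfv2 b.val b.isLt (by omega)] at hveq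
      omega
    · rw [hfv1 a.val a.isLt (by omega) ha, hfv3 b.val b.isLt (by omega) hb] at hveq
      have := π'.injective (Fin.ext (show ((π' ⟨a.val, by omega⟩).val : ℕ)
        = (π' ⟨b.val - 1, by omega⟩).val by omega))
      have := congrArg Fin.val this
      simp only [Fin.val_mk] at this
      omega
    · rw [hfv1 b.val b.isLt (by omega) hb, hfv2 a.val a.isLt (by omega)] at hveq
      omega
    · omega
    · rw [hfv3 b.val b.isLt (by omega) hb, hfv2 a.val a.isLt (by omega)] at hveq
      omega
    · rw [hfv3 a.val a.isLt (by omega) ha, hfv1 b.val b.isLt (by omega) hb] at hveq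
      have := π'.injective (Fin.ext (show ((π' ⟨a.val - 1, by omega⟩).val : ℕ)
        = (π' ⟨b.val, by omega⟩).val by omega))
      have := congrArg Fin.val this
      simp only [Fin.val_mk] at this
      omega
    · rw [hfv3 a.val a.isLt (by omega) ha, hfv2 b.val b.isLt (by omega)] at hveq
      omega
    · rw [hfv3 a.val a.isLt (by omega) ha, hfv3 b.val b.isLt (by omega) hb] at hveq
      have := π'.injective (Fin.ext (show ((π' ⟨a.val - 1, by omega⟩).val : ℕ)
        = (π' ⟨b.val - 1, by omega⟩).val by omega))
      have := congrArg Fin.val this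
      simp only [Fin.val_mk] at this
      omega
  set ε : Fin (n/4) → Bool := fun i =>
    if h1 : i.val < (q/4) then ε' ⟨i.val, by omega⟩
    else if h2 : i.val = (q/4) then εb
    else ε' ⟨i.val - 1, by have := i.isLt; omega⟩
    with hε
  have hεv1 : ∀ (av : ℕ) (hav : av < n/4) (hpf : av < ((n-4)/4)), av < (q/4) →
      ε ⟨av, hav⟩ = ε' ⟨av, hpf⟩ := by
    intro av hav hpf h1
    simp only [hε]
    rw [dif_pos h1]
  have hεv2 : ∀ (av : ℕ) (hav : av < n/4), av = q/4 → ε ⟨av, hav⟩ = εb := by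
    intro av hav h2
    simp only [hε]
    rw [dif_neg (by omega), dif_pos h2]
  have hεv3 : ∀ (av : ℕ) (hav : av < n/4) (hpf : av - 1 < ((n-4)/4)), (q/4) < av →
      ε ⟨av, hav⟩ = ε' ⟨av - 1, hpf⟩ := by
    intro av hav hpf h1
    simp only [hε]
    rw [dif_neg (by omega), dif_neg (by omega)]
  refine ⟨Equiv.ofBijective f (Finite.injective_iff_bijective.mp hfinj), ε, ?_⟩
  apply perm_ext_A
  intro j hj
  have ha : j / 4 < n / 4 := by omega
  have hs : j % 4 < 4 := by omega
  rw [show j = 4 * (j/4) + j % 4 by omega,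
    infl_apply (Equiv.ofBijective f (Finite.injective_iff_bijective.mp hfinj)) ε ha hs]
  have hπv : ((Equiv.ofBijective f (Finite.injective_iff_bijective.mp hfinj)) ⟨j/4, ha⟩).val
      = (f ⟨j/4, ha⟩).val := rfl
  rcases Nat.lt_trichotomy (j/4) (q/4) with hc | hc | hc
  · -- before the block
    have hpf : j/4 < ((n-4)/4) := by omega
    rw [hπv, hfv1 (j/4) ha hpf hc, hεv1 (j/4) ha hpf hc]
    have := valform hblk hσ' (show 4*(j/4) + j%4 < n by omega) hs hpf
      (Or.inl ⟨by omega, rfl⟩)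
    omega
  · -- the inserted block
    rw [hπv, hfv2 (j/4) ha hc, hεv2 (j/4) ha hc]
    have hz : 4 * (j/4) + j % 4 = q + j % 4 := by omega
    rw [hz]
    have hs4 : j % 4 = 0 ∨ j % 4 = 1 ∨ j % 4 = 2 ∨ j % 4 = 3 := by omega
    rcases hpat with ⟨p0, p1, p2, p3⟩ | ⟨p0, p1, p2, p3⟩
    · have he : εb = false := by rw [hεb, if_neg (by omega)]
      rw [he]
      rcases hs4 with hs' | hs' | hs' | hs' <;> rw [hs'] <;> simp [pat] <;> omega
    · have he : εb = true := by rw [hεb, if_pos (by omega)]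
      rw [he]
      rcases hs4 with hs' | hs' | hs' | hs' <;> rw [hs'] <;> simp [pat] <;> omega
  · -- after the block
    have hpf : j/4 - 1 < ((n-4)/4) := by omega
    rw [hπv, hfv3 (j/4) ha hpf hc, hεv3 (j/4) ha hpf hc]
    have := valform hblk hσ' (show 4*(j/4) + j%4 < n by omega) hs hpf
      (Or.inr ⟨by omega, by omega⟩)
    omega


theorem card_good (n : ℕ) :
    Nat.card {σ : Equiv.Perm (Fin n) // Good σ}
      = if n % 4 = 0 then 2 ^ (n / 4) * (n / 4).factorial else 0 := by
  by_cases hn : n % 4 = 0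
  · rw [if_pos hn]
    have hbij : Function.Bijective
        (fun pe : Equiv.Perm (Fin (n/4)) × (Fin (n/4) → Bool) =>
          (⟨inflPerm n pe.1 pe.2, good_infl hn pe.1 pe.2⟩ :
            {σ : Equiv.Perm (Fin n) // Good σ})) := by
      constructor
      · intro a b hab
        exact infl_inj (congrArg Subtype.val hab)
      · rintro ⟨σ, hσ⟩
        obtain ⟨-, π, ε, rfl⟩ := struct_thm σ hσ
        exact ⟨(π, ε), rfl⟩
    rw [← Nat.card_congr (Equiv.ofBijective _ hbij)]
    rw [Nat.card_prod, Nat.card_eq_fintype_card, Nat.card_eq_fintype_card,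
      Fintype.card_perm, Fintype.card_fun, Fintype.card_bool, Fintype.card_fin]
    ring
  · rw [if_neg hn]
    have : IsEmpty {σ : Equiv.Perm (Fin n) // Good σ} :=
      ⟨fun x => hn (struct_thm x.1 x.2).1⟩
    exact Nat.card_of_isEmpty

end Sep8

/-- the number of permutations of `S_n` all of whose digits are
separators is `2^k · k!` when `n = 4k` (`k ≥ 1`) and `0` otherwise. -/
theorem stmt8 {n : ℕ} (hn : 0 < n) :
    Nat.card {σ : Equiv.Perm (Fin n) // ∀ b : Fin n, IsVSepVal σ b ∨ IsHSepVal σ b}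
      = if n % 4 = 0 then 2 ^ (n / 4) * (n / 4).factorial else 0 := by
  have : {σ : Equiv.Perm (Fin n) // ∀ b : Fin n, IsVSepVal σ b ∨ IsHSepVal σ b}
      = {σ : Equiv.Perm (Fin n) // Sep8.Good σ} := by
    congr 1
    ext σ
    exact Sep8.good_iff σ
  rw [this, Sep8.card_good]
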